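/- The sequence ln I(n)/v(n) converges as n → ∞ to a limit S, and for every integer m ≥ 1, 0 < S − 3^{−m}·( ln 4 + (2/3)·ln pc(m) ) < 3^{−m}·( (β(m)−1)/4 + γ(m)^3/96 ). -/

import Mathlib

/-- One step of the recursion for the ice-model boundary counts
`(pa, pb, pc, pd)` on the Sierpinski gasket `SG(n)`. -/
def iceStep : ℕ × ℕ × ℕ × ℕ → ℕ × ℕ × ℕ × ℕ
  | (a, b, c, d) =>
    ((a + b) ^ 2 * (a + 3 * c + d),
     (a + b) ^ 2 * (b + 3 * c + d),
     a ^ 2 * b + b ^ 2 * a + (3 * c + d) ^ 3,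
     a ^ 3 + b ^ 3 + (3 * c + d) ^ 3)

/-- The quadruple `(pa(n), pb(n), pc(n), pd(n))`. -/
def iceSeq : ℕ → ℕ × ℕ × ℕ × ℕ
  | 0 => (0, 1, 0, 1)
  | n + 1 => iceStep (iceSeq n)

def pa (n : ℕ) : ℕ := (iceSeq n).1
def pb (n : ℕ) : ℕ := (iceSeq n).2.1
def pc (n : ℕ) : ℕ := (iceSeq n).2.2.1
def pd (n : ℕ) : ℕ := (iceSeq n).2.2.2

noncomputable def alphaSeq (n : ℕ) : ℝ := (pa n : ℝ) / (pb n : ℝ)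
noncomputable def betaSeq (n : ℕ) : ℝ := (pd n : ℝ) / (pc n : ℝ)
noncomputable def gammaSeq (n : ℕ) : ℝ := (pb n : ℝ) / (pc n : ℝ)

/-- The number of ice-model configurations on `SG(n)`. -/
def iceI (n : ℕ) : ℕ := 6 * pa n + 6 * pb n + 6 * pc n + 2 * pd n

/-- The number of vertices of `SG(n)` (the division is exact). -/
def vSG (n : ℕ) : ℕ := 3 * (3 ^ n + 1) / 2

set_option maxHeartbeats 1000000 in
lemma key_ineq (a b c d b' c' d' : ℝ) (ha : 1 ≤ a) (hab : a < b) (hc : 1 ≤ c) (hcd : c ≤ d)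
    (hbc : 2*b ≤ c) (hdc : 20*d ≤ 21*c)
    (hb' : b' = (a+b)^2*(b+3*c+d))
    (hc' : c' = a^2*b + b^2*a + (3*c+d)^3)
    (hd' : d' = a^3 + b^3 + (3*c+d)^3) :
    (2/9) * Real.log (c'/(64*c^3)) + (1/3)*((d'/c' - 1)/4 + (b'/c')^3/96)
      < (d/c - 1)/4 + (b/c)^3/96 := by
  have hc0 : (0:ℝ) < c := by linarith
  have ha0 : (0:ℝ) < a := by linarith
  have hb0 : (0:ℝ) < b := by linarith
  have hc30 : (0:ℝ) < 64*c^3 := by positivity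
  have h4c : (4*c)^3 ≤ (3*c+d)^3 := pow_le_pow_left₀ (by linarith) (by linarith) 3
  have hK1 : 64*c^3 < c' := by
    have h : 0 < a^2*b + b^2*a := by positivity
    rw [hc']; nlinarith
  have hc'0 : (0:ℝ) < c' := by linarith
  -- log bound
  have hlog : Real.log (c'/(64*c^3)) ≤ (c' - 64*c^3)/(64*c^3) := by
    have h := Real.log_le_sub_one_of_pos (show (0:ℝ) < c'/(64*c^3) by positivity)
    rwa [div_sub_one (ne_of_gt hc30)] at h
  -- numerator bounds
  have habcube : a^2*b + b^2*a ≤ 2*b^3 := by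
    nlinarith [mul_nonneg (mul_nonneg hb0.le (sub_nonneg.2 hab.le))
      (show (0:ℝ) ≤ a+2*b by linarith)]
  have hB : (3*c+d)^3 - 64*c^3 ≤ (19441/400)*(d-c)*c^2 := by
    nlinarith [mul_nonneg (mul_nonneg (sub_nonneg.2 hcd) (sub_nonneg.2 hcd))
        (show (0:ℝ) ≤ c - 20*(d-c) by linarith),
      mul_nonneg (mul_nonneg (sub_nonneg.2 hcd) (show (0:ℝ) ≤ c - 20*(d-c) by linarith)) hc0.le,
      mul_nonneg (sub_nonneg.2 hcd) (sq_nonneg c)]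
  have hnum1 : c' - 64*c^3 ≤ (19441/400)*(d-c)*c^2 + 2*b^3 := by rw [hc']; linarith
  have hnum2 : d' - c' ≤ 2*b^3 := by
    rw [hc', hd']; nlinarith [mul_nonneg (mul_nonneg hb0.le (sub_nonneg.2 hab.le))
      (show (0:ℝ) ≤ a+2*b by linarith), mul_nonneg (mul_nonneg ha0.le (sub_nonneg.2 hab.le))
      (show (0:ℝ) ≤ a+b by linarith)]
  have hnum2' : 0 ≤ d' - c' := by
    rw [hc', hd']
    nlinarith [mul_nonneg (show (0:ℝ) ≤ a+b by linarith) (sq_nonneg (b-a))]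
  have hnum3 : b' ≤ (91/5)*b^2*c := by
    have h1 : (a+b)^2 ≤ 4*b^2 := by nlinarith
    have h2 : b+3*c+d ≤ (91/20)*c := by linarith
    have hbb : (0:ℝ) ≤ b+3*c+d := by linarith
    have h3 : (a+b)^2*(b+3*c+d) ≤ (4*b^2)*((91/20)*c) :=
      mul_le_mul h1 h2 hbb (by nlinarith [sq_nonneg b])
    rw [hb']; linarith [h3]
  have hb'0 : 0 ≤ b' := by rw [hb']; nlinarith [sq_nonneg (a+b)]
  -- term 1
  have h1 : (c' - 64*c^3)/(64*c^3) ≤ (19441/25600)*((d-c)/c) + (1/32)*(b/c)^3 := by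
    have e : ((19441/400)*(d-c)*c^2 + 2*b^3)/(64*c^3)
        = (19441/25600)*((d-c)/c) + (1/32)*(b/c)^3 := by
      field_simp; ring
    rw [← e]
    gcongr
  -- term 2
  have h2 : (d' - c')/c' ≤ (1/32)*(b/c)^3 := by
    have e : (2*b^3)/(64*c^3) = (1/32)*(b/c)^3 := by field_simp; ring
    calc (d' - c')/c' ≤ (2*b^3)/(64*c^3) :=
          div_le_div₀ (by positivity) hnum2 hc30 hK1.le
      _ = (1/32)*(b/c)^3 := e
  -- term 3
  have hY8 : 8*b^3 ≤ c^3 := by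
    have := pow_le_pow_left₀ (show (0:ℝ) ≤ 2*b by linarith) hbc 3
    nlinarith [this]
  have h3 : (b'/c')^3 ≤ (753571/262144000)*(b/c)^3 := by
    have hq : b'/c' ≤ ((91/5)*b^2*c)/(64*c^3) :=
      div_le_div₀ (by positivity) hnum3 hc30 hK1.le
    have hcube : (b'/c')^3 ≤ (((91/5)*b^2*c)/(64*c^3))^3 :=
      pow_le_pow_left₀ (div_nonneg hb'0 hc'0.le) hq 3
    have e : (((91/5)*b^2*c)/(64*c^3))^3 = (753571/32768000)*((b/c)^3)^2 := by
      field_simp; ring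
    have h6 : ((b/c)^3)^2 ≤ (1/8)*(b/c)^3 := by
      have hY : (b/c)^3 ≤ 1/8 := by
        rw [div_pow, div_le_iff₀ (by positivity)]; linarith
      nlinarith [pow_nonneg (div_nonneg hb0.le hc0.le) 3]
    calc (b'/c')^3 ≤ (753571/32768000)*((b/c)^3)^2 := by rw [← e]; exact hcube
      _ ≤ (753571/32768000)*((1/8)*(b/c)^3) := by nlinarith [h6]
      _ = (753571/262144000)*(b/c)^3 := by ring
  -- assemble
  have hX : 0 ≤ (d-c)/c := div_nonneg (by linarith) hc0.le
  have hY : 0 < (b/c)^3 := by positivity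
  have ed' : d'/c' - 1 = (d'-c')/c' := by
    field_simp
  have ed : d/c - 1 = (d-c)/c := by field_simp
  rw [ed', ed]
  linarith [hlog, h1, h2, h3, hX, hY]

lemma ice_succ (n : ℕ) :
    pa (n+1) = (pa n + pb n)^2 * (pa n + 3 * pc n + pd n) ∧
    pb (n+1) = (pa n + pb n)^2 * (pb n + 3 * pc n + pd n) ∧
    pc (n+1) = (pa n)^2 * pb n + (pb n)^2 * pa n + (3 * pc n + pd n)^3 ∧
    pd (n+1) = (pa n)^3 + (pb n)^3 + (3 * pc n + pd n)^3 := by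
  have h : iceSeq (n+1) = iceStep (iceSeq n) := rfl
  unfold pa pb pc pd
  rw [h]
  rcases iceSeq n with ⟨a, b, c, d⟩
  exact ⟨rfl, rfl, rfl, rfl⟩

lemma step_facts (a b c d : ℝ) (ha : 1 ≤ a) (hab : a < b) (hc : 1 ≤ c) (hcd : c ≤ d)
    (hbc : 2*b ≤ c) (hdc : 20*d ≤ 21*c) :
    1 ≤ (a+b)^2*(a+3*c+d) ∧
    (a+b)^2*(a+3*c+d) < (a+b)^2*(b+3*c+d) ∧
    1 ≤ a^2*b + b^2*a + (3*c+d)^3 ∧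
    a^2*b + b^2*a + (3*c+d)^3 ≤ a^3 + b^3 + (3*c+d)^3 ∧
    2*((a+b)^2*(b+3*c+d)) ≤ a^2*b + b^2*a + (3*c+d)^3 ∧
    20*(a^3 + b^3 + (3*c+d)^3) ≤ 21*(a^2*b + b^2*a + (3*c+d)^3) := by
  have hb0 : (0:ℝ) < b := by linarith
  have ha0 : (0:ℝ) < a := by linarith
  have hc0 : (0:ℝ) < c := by linarith
  have h4c : (4*c)^3 ≤ (3*c+d)^3 := pow_le_pow_left₀ (by linarith) (by linarith) 3
  have hY8 : 8*b^3 ≤ c^3 := by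
    have := pow_le_pow_left₀ (show (0:ℝ) ≤ 2*b by linarith) hbc 3
    nlinarith [this]
  have hb2 : 4*b^2 ≤ c^2 := by
    have := pow_le_pow_left₀ (show (0:ℝ) ≤ 2*b by linarith) hbc 2
    nlinarith [this]
  have hdmc : 0 ≤ (a+b)*(b-a)^2 := by positivity
  refine ⟨by nlinarith, ?_, by nlinarith, by nlinarith [hdmc], ?_, ?_⟩
  · have h1 : (0:ℝ) < (a+b)^2 := by positivity
    exact mul_lt_mul_of_pos_left (by linarith) h1
  · -- 2 b' ≤ c'
    have h1 : (a+b)^2 ≤ 4*b^2 := by nlinarith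
    have h2 : b+3*c+d ≤ (91/20)*c := by linarith
    have hbb : (0:ℝ) ≤ b+3*c+d := by linarith
    have h3 : (a+b)^2*(b+3*c+d) ≤ (4*b^2)*((91/20)*c) :=
      mul_le_mul h1 h2 hbb (by nlinarith [sq_nonneg b])
    nlinarith [mul_le_mul_of_nonneg_right hb2 hc0.le, mul_pos ha0 (mul_pos ha0 hb0)]
  · -- 20 d' ≤ 21 c'
    have h1 : (a^3+b^3) - (a^2*b + b^2*a) ≤ 2*b^3 := by
      nlinarith [mul_nonneg (mul_nonneg hb0.le (sub_nonneg.2 hab.le))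
        (show (0:ℝ) ≤ a+2*b by linarith), mul_nonneg (mul_nonneg ha0.le (sub_nonneg.2 hab.le))
        (show (0:ℝ) ≤ a+b by linarith)]
    nlinarith [mul_pos ha0 (mul_pos ha0 hb0), mul_pos hb0 (mul_pos hb0 ha0)]

def IceInv (n : ℕ) : Prop :=
  1 ≤ pa n ∧ pa n < pb n ∧ 1 ≤ pc n ∧ pc n ≤ pd n ∧ 2 * pb n ≤ pc n ∧ 20 * pd n ≤ 21 * pc n

lemma inv_two : IceInv 2 := by
  have h1 : pa 2 = 54 := rfl
  have h2 : pb 2 = 63 := rfl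
  have h3 : pc 2 = 131 := rfl
  have h4 : pd 2 = 134 := rfl
  unfold IceInv
  rw [h1, h2, h3, h4]
  norm_num

lemma inv_succ (n : ℕ) (h : IceInv n) : IceInv (n+1) := by
  obtain ⟨h1, h2, h3, h4, h5, h6⟩ := h
  obtain ⟨ea, eb, ec, ed⟩ := ice_succ n
  have hf := step_facts (pa n) (pb n) (pc n) (pd n)
    (by exact_mod_cast h1) (by exact_mod_cast h2) (by exact_mod_cast h3)
    (by exact_mod_cast h4) (by push_cast; exact_mod_cast h5) (by push_cast; exact_mod_cast h6)
  obtain ⟨f1, f2, f3, f4, f5, f6⟩ := hf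
  refine ⟨?_, ?_, ?_, ?_, ?_, ?_⟩
  · rw [ea]; exact_mod_cast (by push_cast; exact f1 : (1:ℝ) ≤ ((pa n + pb n)^2 * (pa n + 3 * pc n + pd n) : ℕ))
  · rw [ea, eb]; exact_mod_cast (by push_cast; exact f2 :
      (((pa n + pb n)^2 * (pa n + 3 * pc n + pd n) : ℕ) : ℝ) < ((pa n + pb n)^2 * (pb n + 3 * pc n + pd n) : ℕ))
  · rw [ec]; exact_mod_cast (by push_cast; exact f3 : (1:ℝ) ≤ (((pa n)^2 * pb n + (pb n)^2 * pa n + (3 * pc n + pd n)^3 : ℕ) : ℝ))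
  · rw [ec, ed]; exact_mod_cast (by push_cast; exact f4 :
      ((((pa n)^2 * pb n + (pb n)^2 * pa n + (3 * pc n + pd n)^3 : ℕ)) : ℝ) ≤ (((pa n)^3 + (pb n)^3 + (3 * pc n + pd n)^3 : ℕ) : ℝ))
  · rw [eb, ec]; exact_mod_cast (by push_cast; exact f5 :
      ((2 * ((pa n + pb n)^2 * (pb n + 3 * pc n + pd n)) : ℕ) : ℝ) ≤ (((pa n)^2 * pb n + (pb n)^2 * pa n + (3 * pc n + pd n)^3 : ℕ) : ℝ))
  · rw [ec, ed]; exact_mod_cast (by push_cast; exact f6 :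
      ((20 * ((pa n)^3 + (pb n)^3 + (3 * pc n + pd n)^3) : ℕ) : ℝ) ≤ ((21 * ((pa n)^2 * pb n + (pb n)^2 * pa n + (3 * pc n + pd n)^3) : ℕ) : ℝ))

lemma inv_of_two_le : ∀ n, 2 ≤ n → IceInv n := by
  intro n hn
  induction n with
  | zero => omega
  | succ m ih =>
    rcases Nat.lt_or_ge m 2 with h | h
    · interval_cases m
      · omega
      · exact inv_two
    · exact inv_succ m (ih h)

lemma basic (n : ℕ) (hn : 1 ≤ n) :
    1 ≤ pa n ∧ pa n < pb n ∧ 1 ≤ pc n ∧ pc n ≤ pd n ∧ pb n ≤ 2 * pc n ∧ pd n ≤ 2 * pc n := by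
  rcases Nat.lt_or_ge n 2 with h | h
  · have hn1 : n = 1 := by omega
    subst hn1
    refine ⟨le_refl _, ?_, le_refl _, ?_, ?_, ?_⟩ <;> decide
  · obtain ⟨h1, h2, h3, h4, h5, h6⟩ := inv_of_two_le n h
    exact ⟨h1, h2, h3, h4, by omega, by omega⟩

noncomputable def tt (n : ℕ) : ℝ := ((3:ℝ)^n)⁻¹ * (Real.log 4 + 2/3 * Real.log (pc n))
noncomputable def EE (n : ℕ) : ℝ := (betaSeq n - 1)/4 + gammaSeq n ^ 3/96
noncomputable def uu (n : ℕ) : ℝ := tt n + ((3:ℝ)^n)⁻¹ * EE n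

lemma pc_growth (n : ℕ) (hn : 1 ≤ n) : 64 * (pc n)^3 < pc (n+1) := by
  obtain ⟨h1, h2, h3, h4, _, _⟩ := basic n hn
  obtain ⟨_, _, ec, _⟩ := ice_succ n
  have hcube : (4 * pc n)^3 ≤ (3 * pc n + pd n)^3 := Nat.pow_le_pow_left (by omega) 3
  have hab : 1 ≤ (pa n)^2 * pb n := Nat.one_le_iff_ne_zero.mpr (Nat.mul_ne_zero (pow_ne_zero 2 (by omega)) (by omega))
  rw [ec]
  calc 64 * (pc n)^3 < 1 + (4 * pc n)^3 := by ring_nf; omega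
    _ ≤ (pa n)^2 * pb n + (pb n)^2 * pa n + (3 * pc n + pd n)^3 := by omega

lemma tt_diff (n : ℕ) (hn : 1 ≤ n) :
    tt (n+1) - tt n
      = (2/9) * ((3:ℝ)^n)⁻¹ * Real.log ((pc (n+1) : ℝ)/(64 * (pc n : ℝ)^3)) := by
  have hc : (1:ℝ) ≤ (pc n : ℝ) := by exact_mod_cast (basic n hn).2.2.1
  have hc' : (1:ℝ) ≤ (pc (n+1) : ℝ) := by exact_mod_cast (basic (n+1) (by omega)).2.2.1
  have hc0 : (0:ℝ) < (pc n : ℝ) := by linarith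
  have hc0' : (0:ℝ) < (pc (n+1) : ℝ) := by linarith
  have hlog : Real.log ((pc (n+1) : ℝ)/(64 * (pc n : ℝ)^3))
      = Real.log (pc (n+1)) - 3 * Real.log 4 - 3 * Real.log (pc n) := by
    rw [Real.log_div (by positivity) (by positivity),
      Real.log_mul (by norm_num) (by positivity), Real.log_pow,
      show (64:ℝ) = 4^3 by norm_num, Real.log_pow]
    push_cast; ring
  rw [hlog]
  unfold tt
  rw [pow_succ]
  have h3 : ((3:ℝ)^n) ≠ 0 := by positivity
  field_simp
  ring
lemma step_main (n : ℕ) (hn : 1 ≤ n) :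
    (2/9) * Real.log ((pc (n+1) : ℝ)/(64 * (pc n : ℝ)^3)) + (1/3) * EE (n+1) < EE n := by
  obtain ⟨ea, eb, ec, ed⟩ := ice_succ n
  rcases Nat.lt_or_ge n 2 with h2 | h2
  · -- n = 1
    have hn1 : n = 1 := by omega
    subst hn1
    have e1 : pc 1 = 1 := rfl
    have e2 : pc 2 = 131 := rfl
    have e3 : pd 2 = 134 := rfl
    have e4 : pb 2 = 63 := rfl
    have e5 : pb 1 = 2 := rfl
    have e6 : pd 1 = 2 := rfl
    have hlog : Real.log ((131:ℝ)/64) ≤ 67/64 := by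
      have h := Real.log_le_sub_one_of_pos (show (0:ℝ) < 131/64 by norm_num)
      linarith
    unfold EE betaSeq gammaSeq
    rw [e1, e2, e3, e4, e5, e6]
    push_cast
    norm_num
    nlinarith [hlog]
  · -- n ≥ 2
    obtain ⟨h1, hab, h3, h4, h5, h6⟩ := inv_of_two_le n h2
    have key := key_ineq (pa n) (pb n) (pc n) (pd n)
      ((pb (n+1) : ℝ)) ((pc (n+1) : ℝ)) ((pd (n+1) : ℝ))
      (by exact_mod_cast h1) (by exact_mod_cast hab) (by exact_mod_cast h3)
      (by exact_mod_cast h4) (by exact_mod_cast h5) (by exact_mod_cast h6)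
      (by rw [eb]; push_cast; ring) (by rw [ec]; push_cast; ring) (by rw [ed]; push_cast; ring)
    unfold EE betaSeq gammaSeq
    exact key

lemma EE_nonneg (n : ℕ) (hn : 1 ≤ n) : 0 ≤ EE n := by
  obtain ⟨h1, h2, h3, h4, _, _⟩ := basic n hn
  have hc0 : (0:ℝ) < (pc n : ℝ) := by exact_mod_cast Nat.lt_of_lt_of_le one_pos h3
  have hb : (0:ℝ) ≤ betaSeq n - 1 := by
    unfold betaSeq
    rw [sub_nonneg, le_div_iff₀ hc0, one_mul]
    exact_mod_cast h4
  have hg : (0:ℝ) ≤ gammaSeq n ^ 3 := by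
    unfold gammaSeq; positivity
  unfold EE; positivity

lemma tt_lt_succ (n : ℕ) (hn : 1 ≤ n) : tt n < tt (n+1) := by
  have hd := tt_diff n hn
  have hc : (1:ℝ) ≤ (pc n : ℝ) := by exact_mod_cast (basic n hn).2.2.1
  have hgrow : (64:ℝ) * (pc n : ℝ)^3 < (pc (n+1) : ℝ) := by exact_mod_cast pc_growth n hn
  have hpos : (0:ℝ) < 64 * (pc n : ℝ)^3 := by positivity
  have hlogpos : 0 < Real.log ((pc (n+1) : ℝ)/(64 * (pc n : ℝ)^3)) :=
    Real.log_pos ((one_lt_div hpos).mpr hgrow)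
  have h3 : (0:ℝ) < ((3:ℝ)^n)⁻¹ := by positivity
  nlinarith [hd]

lemma uu_succ_lt (n : ℕ) (hn : 1 ≤ n) : uu (n+1) < uu n := by
  have hd := tt_diff n hn
  have hkey := step_main n hn
  have h3 : (0:ℝ) < ((3:ℝ)^n)⁻¹ := by positivity
  have e : uu (n+1) - uu n
      = ((3:ℝ)^n)⁻¹ * (((2/9) * Real.log ((pc (n+1) : ℝ)/(64 * (pc n : ℝ)^3))
          + (1/3) * EE (n+1)) - EE n) := by
    unfold uu
    have : tt (n+1) = tt n + (2/9) * ((3:ℝ)^n)⁻¹ * Real.log ((pc (n+1) : ℝ)/(64 * (pc n : ℝ)^3)) := by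
      linarith [hd]
    rw [this, pow_succ]
    have h30 : ((3:ℝ)^n) ≠ 0 := by positivity
    field_simp
    ring
  have : uu (n+1) - uu n < 0 := by
    rw [e]
    exact mul_neg_of_pos_of_neg h3 (by linarith)
  linarith

lemma uu_le_of_le (m n : ℕ) (hm : 1 ≤ m) (hmn : m ≤ n) : uu n ≤ uu m := by
  induction n, hmn using Nat.le_induction with
  | base => exact le_refl _
  | succ n hmn ih => exact le_trans (uu_succ_lt n (le_trans hm hmn)).le ih

lemma tt_le_uu (n : ℕ) (hn : 1 ≤ n) : tt n ≤ uu n := by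
  have h3 : (0:ℝ) ≤ ((3:ℝ)^n)⁻¹ := by positivity
  have := EE_nonneg n hn
  unfold uu
  nlinarith

noncomputable def SS : ℝ := ⨆ n, tt (n+1)

lemma tt_bdd : BddAbove (Set.range fun n => tt (n+1)) := by
  refine ⟨uu 1, ?_⟩
  rintro x ⟨n, rfl⟩
  exact le_trans (tt_le_uu (n+1) (by omega)) (uu_le_of_le 1 (n+1) le_rfl (by omega))

lemma tt_mono : Monotone fun n => tt (n+1) :=
  (strictMono_nat_of_lt_succ fun n => tt_lt_succ (n+1) (by omega)).monotone

lemma tt_tendsto' : Filter.Tendsto (fun n => tt (n+1)) Filter.atTop (nhds SS) :=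
  tendsto_atTop_ciSup tt_mono tt_bdd

lemma tt_tendsto : Filter.Tendsto tt Filter.atTop (nhds SS) :=
  (Filter.tendsto_add_atTop_iff_nat 1).mp tt_tendsto'

lemma SS_bounds (m : ℕ) (hm : 1 ≤ m) : tt m < SS ∧ SS < uu m := by
  constructor
  · exact lt_of_lt_of_le (tt_lt_succ m hm) (le_ciSup tt_bdd m)
  · have h1 : SS ≤ uu (m+1) := by
      refine le_of_tendsto tt_tendsto' (Filter.eventually_atTop.mpr ⟨m, fun n hn => ?_⟩)
      exact le_trans (tt_le_uu (n+1) (by omega)) (uu_le_of_le (m+1) (n+1) (by omega) (by omega))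
    exact lt_of_le_of_lt h1 (uu_succ_lt m hm)

lemma vSG_cast (n : ℕ) : (vSG n : ℝ) = 3*((3:ℝ)^n+1)/2 := by
  have hodd : Odd ((3:ℕ)^n) := Odd.pow (by decide)
  have h2 : 2 ∣ 3 * ((3:ℕ)^n+1) := Dvd.dvd.mul_left (Even.two_dvd hodd.add_one) 3
  unfold vSG
  rw [Nat.cast_div h2 (by norm_num)]
  push_cast; ring

lemma uu_one_nonneg : 0 ≤ uu 1 := by
  have h1 : tt 1 = Real.log 4 / 3 := by
    have e1 : pc 1 = 1 := rfl
    unfold tt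
    rw [e1]
    push_cast
    rw [Real.log_one]
    ring
  have h2 : 0 ≤ tt 1 := by
    rw [h1]
    have := Real.log_nonneg (show (1:ℝ) ≤ 4 by norm_num)
    linarith
  linarith [tt_le_uu 1 le_rfl]

set_option maxHeartbeats 1000000 in
lemma diff_bound (n : ℕ) (hn : 1 ≤ n) :
    |Real.log (iceI n) / (vSG n : ℝ) - tt n| ≤ (13/4 + (3/2)*uu 1) * (1/3:ℝ)^n := by
  obtain ⟨h1, h2, h3, h4, h5, h6⟩ := basic n hn
  set P := (3:ℝ)^n with hPdef
  set Q := (1/3:ℝ)^n with hQdef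
  have hPQ : P*Q = 1 := by rw [hPdef, hQdef, ← mul_pow]; norm_num
  have hP0 : (0:ℝ) < P := by positivity
  have hP1 : (1:ℝ) ≤ P := by rw [hPdef]; exact one_le_pow₀ (by norm_num)
  have hc1 : (1:ℝ) ≤ (pc n : ℝ) := by exact_mod_cast h3
  have hc0 : (0:ℝ) < (pc n : ℝ) := by linarith
  have hI8 : (8:ℝ)*(pc n : ℝ) ≤ (iceI n : ℝ) := by
    have : 8 * pc n ≤ iceI n := by unfold iceI; omega
    exact_mod_cast this
  have hI34 : (iceI n : ℝ) ≤ 34*(pc n : ℝ) := by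
    have : iceI n ≤ 34 * pc n := by unfold iceI; omega
    exact_mod_cast this
  have hIpos : (0:ℝ) < (iceI n : ℝ) := by nlinarith
  set L := Real.log (iceI n) with hLdef
  set M := Real.log (8*(pc n : ℝ)) with hMdef
  have hML : M ≤ L := Real.log_le_log (by positivity) hI8
  have hLM : L ≤ M + 13/4 := by
    have e : L - M = Real.log ((iceI n : ℝ)/(8*(pc n:ℝ))) :=
      (Real.log_div hIpos.ne' (by positivity)).symm
    have hq : Real.log ((iceI n : ℝ)/(8*(pc n:ℝ))) ≤ (iceI n : ℝ)/(8*(pc n:ℝ)) - 1 :=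
      Real.log_le_sub_one_of_pos (by positivity)
    have hq2 : (iceI n : ℝ)/(8*(pc n:ℝ)) ≤ 34/8 := by
      rw [div_le_iff₀ (by positivity)]; linarith
    linarith
  have hM0 : 0 ≤ M := Real.log_nonneg (by linarith)
  have ettM : M = (3/2)*P*tt n := by
    have l8 : M = Real.log 8 + Real.log (pc n) := Real.log_mul (by norm_num) (by positivity)
    have l48 : Real.log 4 = (2/3) * Real.log 8 := by
      rw [show (4:ℝ)=2^2 by norm_num, show (8:ℝ)=2^3 by norm_num, Real.log_pow, Real.log_pow]
      push_cast; ring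
    rw [l8]
    unfold tt
    rw [l48, ← hPdef]
    field_simp
  have htu : tt n ≤ uu 1 := le_trans (tt_le_uu n hn) (uu_le_of_le 1 n le_rfl hn)
  have hMuu : M ≤ (3/2) * uu 1 * P := by
    rw [ettM]
    nlinarith [mul_le_mul_of_nonneg_left htu (show (0:ℝ) ≤ (3/2)*P by positivity)]
  have ett2 : tt n = 2*M/(3*P) := by rw [ettM]; field_simp
  have ew : Real.log (iceI n) / (vSG n : ℝ) - tt n
      = (2/3) * ((L - M)*P - M)/(P*(P+1)) := by
    rw [vSG_cast, ett2, ← hPdef, ← hLdef]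
    field_simp
    ring
  rw [ew]
  set C := (13/4 + (3/2)*uu 1 : ℝ) with hCdef
  have hC134 : (13/4:ℝ) ≤ C := by rw [hCdef]; nlinarith [uu_one_nonneg]
  have hQP : Q*(P*(P+1)) = P+1 := by
    calc Q*(P*(P+1)) = (P*Q)*(P+1) := by ring
      _ = P+1 := by rw [hPQ, one_mul]
  have hNle : (L - M)*P - M ≤ (13/4)*P := by
    nlinarith [mul_le_mul_of_nonneg_right (show L - M ≤ 13/4 by linarith) hP0.le]
  have hNge : -((3/2)*uu 1*P) ≤ (L - M)*P - M := by
    nlinarith [mul_nonneg (show (0:ℝ) ≤ L - M by linarith) hP0.le]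
  rw [abs_le]
  constructor
  · rw [le_div_iff₀ (by positivity)]
    have e2 : -(C*Q)*(P*(P+1)) = -(C*(P+1)) := by
      calc -(C*Q)*(P*(P+1)) = -(C*(Q*(P*(P+1)))) := by ring
        _ = -(C*(P+1)) := by rw [hQP]
    rw [e2]
    have hC0 : (0:ℝ) ≤ C := le_trans (by norm_num) hC134
    have hCu : (3/2)*uu 1 ≤ C := by rw [hCdef]; linarith [uu_one_nonneg]
    have hB := mul_le_mul_of_nonneg_right hCu hP0.le
    have hA := mul_nonneg uu_one_nonneg hP0.le
    linarith
  · rw [div_le_iff₀ (by positivity)]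
    have e2 : C*Q*(P*(P+1)) = C*(P+1) := by
      calc C*Q*(P*(P+1)) = C*(Q*(P*(P+1))) := by ring
        _ = C*(P+1) := by rw [hQP]
    rw [e2]
    nlinarith [mul_le_mul_of_nonneg_right hC134 hP0.le]

lemma w_tendsto : Filter.Tendsto (fun n => Real.log (iceI n) / (vSG n : ℝ))
    Filter.atTop (nhds SS) := by
  have h0 : Filter.Tendsto (fun n : ℕ => (13/4 + (3/2)*uu 1) * (1/3:ℝ)^n)
      Filter.atTop (nhds 0) := by
    have h := tendsto_pow_atTop_nhds_zero_of_lt_one (show (0:ℝ) ≤ 1/3 by norm_num)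
      (show (1/3:ℝ) < 1 by norm_num)
    simpa using h.const_mul (13/4 + (3/2)*uu 1)
  have hdd : Filter.Tendsto (fun n => Real.log (iceI n) / (vSG n : ℝ) - tt n)
      Filter.atTop (nhds 0) :=
    squeeze_zero_norm' (Filter.eventually_atTop.mpr ⟨1, fun n hn => diff_bound n hn⟩) h0
  have h := tt_tendsto.add hdd
  rw [add_zero] at h
  exact h.congr (fun n => by ring)


theorem stmt_14 :
    ∃ S : ℝ, Filter.Tendsto (fun n => Real.log (iceI n) / (vSG n : ℝ))
        Filter.atTop (nhds S) ∧
      ∀ m : ℕ, 1 ≤ m →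
        0 < S - ((3 : ℝ) ^ m)⁻¹ * (Real.log 4 + 2 / 3 * Real.log (pc m)) ∧
        S - ((3 : ℝ) ^ m)⁻¹ * (Real.log 4 + 2 / 3 * Real.log (pc m)) <
          ((3 : ℝ) ^ m)⁻¹ * ((betaSeq m - 1) / 4 + gammaSeq m ^ 3 / 96) := by
  refine ⟨SS, w_tendsto, fun m hm => ?_⟩
  obtain ⟨hl, hu⟩ := SS_bounds m hm
  have e1 : tt m = ((3 : ℝ) ^ m)⁻¹ * (Real.log 4 + 2 / 3 * Real.log (pc m)) := rfl
  have e2 : uu m = tt m + ((3:ℝ)^m)⁻¹ * ((betaSeq m - 1) / 4 + gammaSeq m ^ 3 / 96) := rfl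
  constructor
  · linarith [hl, e1 ▸ hl]
  · rw [← e1]
    linarith [hu, e2 ▸ hu]
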